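/- In R^Λ(n), let ν ∈ I^n and 1 ≤ i ≤ n−1 with ν_i = ν_{i+1}. If x_i² e(ν) = 0, then x_{i+1} e(ν) = −x_i e(ν). -/

import Mathlib

noncomputable section

open scoped TensorProduct

namespace QHApaper




/-! ## Representation type notions -/

/-- A module is indecomposable iff it is nontrivial and its only idempotent
endomorphisms are `0` and `id`. -/
def IsIndecomposable (A : Type) [Ring A] (M : Type) [AddCommGroup M] [Module A M] : Prop :=
  Nontrivial M ∧ ∀ f : M →ₗ[A] M, f ∘ₗ f = f → f = 0 ∨ f = LinearMap.id

/-- `A` has finite representation type over `R`: up to isomorphism there are only finitely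
many finite-dimensional indecomposable `A`-modules. -/
def HasFiniteRepType (R A : Type) [Field R] [Ring A] [Algebra R A] : Prop :=
  ∃ (r : ℕ) (M : Fin r → ModuleCat.{0} A),
    ∀ (N : Type) [AddCommGroup N] [Module R N] [Module A N] [IsScalarTower R A N],
      FiniteDimensional R N → IsIndecomposable A N → ∃ i, Nonempty (N ≃ₗ[A] M i)

/-- The tensor product `M ⊗_B N` of an `(A,B)`-bimodule `M` with a left `B`-module `N`,
realized as the quotient of `M ⊗_R N` by the usual middle-linearity relations.  It is a
left `A`-module. -/
abbrev TensorBimod (R A B : Type) [CommRing R] [Ring A] [Ring B] [Algebra R A] [Algebra R B]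
    (M : Type) [AddCommGroup M] [Module R M] [Module A M] [Module Bᵐᵒᵖ M] [IsScalarTower R A M]
    (N : Type) [AddCommGroup N] [Module R N] [Module B N] : Type :=
  (M ⊗[R] N) ⧸ Submodule.span A
    {x : M ⊗[R] N | ∃ (m : M) (b : B) (y : N), x = (MulOpposite.op b • m) ⊗ₜ[R] y - m ⊗ₜ[R] (b • y)}

/-- An `(A,B)`-bimodule which is finitely generated and free as a right `B`-module. -/
structure BimodOver (R A B : Type) [CommRing R] [Ring A] [Ring B] [Algebra R A] [Algebra R B] :
    Type 1 where
  carrier : Type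
  [iag : AddCommGroup carrier]
  [imr : Module R carrier]
  [ima : Module A carrier]
  [imb : Module Bᵐᵒᵖ carrier]
  [ita : IsScalarTower R A carrier]
  [itb : IsScalarTower R Bᵐᵒᵖ carrier]
  [icomm : SMulCommClass A Bᵐᵒᵖ carrier]
  free : Module.Free Bᵐᵒᵖ carrier
  fg : Module.Finite Bᵐᵒᵖ carrier

/-- The free associative algebra `R⟨X,Y⟩` on two generators. -/
abbrev FreeTwo (R : Type) [Field R] : Type := FreeAlgebra R (Fin 2)

/-- A witness for wildness: an `(A, R⟨X,Y⟩)`-bimodule, f.g. free as right `R⟨X,Y⟩`-module,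
such that `M ⊗_{R⟨X,Y⟩} -` preserves indecomposability and reflects isomorphism on
finite-dimensional modules. -/
structure WildWitness (R A : Type) [Field R] [Ring A] [Algebra R A] : Type 1 where
  W : BimodOver R A (FreeTwo R)
  preserves : ∀ (N : Type) [AddCommGroup N] [Module R N] [Module (FreeTwo R) N]
      [IsScalarTower R (FreeTwo R) N], FiniteDimensional R N →
      IsIndecomposable (FreeTwo R) N →
      letI := W.iag; letI := W.imr; letI := W.ima; letI := W.imb; letI := W.ita
      IsIndecomposable A (TensorBimod R A (FreeTwo R) W.carrier N)
  reflects : ∀ (N N' : Type) [AddCommGroup N] [Module R N] [Module (FreeTwo R) N]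
      [IsScalarTower R (FreeTwo R) N] [AddCommGroup N'] [Module R N'] [Module (FreeTwo R) N']
      [IsScalarTower R (FreeTwo R) N'],
      FiniteDimensional R N → FiniteDimensional R N' →
      (letI := W.iag; letI := W.imr; letI := W.ima; letI := W.imb; letI := W.ita
       Nonempty ((TensorBimod R A (FreeTwo R) W.carrier N) ≃ₗ[A]
         (TensorBimod R A (FreeTwo R) W.carrier N'))) →
      Nonempty (N ≃ₗ[FreeTwo R] N')

/-- `A` has wild representation type over `R`. -/
def HasWildRepType (R A : Type) [Field R] [Ring A] [Algebra R A] : Prop :=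
  Nonempty (WildWitness R A)

/-- `R[T]/(T - c)` as a module over `R[T]`. -/
abbrev PolyQuot (R : Type) [Field R] (c : R) : Type :=
  Polynomial R ⧸ Ideal.span {Polynomial.X - Polynomial.C c}

/-- A witness for tameness in dimension `d`: finitely many `(A, R[T])`-bimodules, each
f.g. free as right `R[T]`-module, such that every `d`-dimensional indecomposable
`A`-module is of the form `M_i ⊗_{R[T]} R[T]/(T-c)`. -/
structure TameWitness (R A : Type) [Field R] [Ring A] [Algebra R A] (d : ℕ) : Type 1 where
  r : ℕ
  M : Fin r → BimodOver R A (Polynomial R)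
  cover : ∀ (L : Type) [AddCommGroup L] [Module R L] [Module A L] [IsScalarTower R A L],
    FiniteDimensional R L → Module.finrank R L = d → IsIndecomposable A L →
    ∃ (i : Fin r) (c : R),
      letI := (M i).iag; letI := (M i).imr; letI := (M i).ima; letI := (M i).imb
      letI := (M i).ita
      Nonempty (L ≃ₗ[A] TensorBimod R A (Polynomial R) (M i).carrier (PolyQuot R c))

/-- `A` has tame representation type over `R`. -/
def HasTameRepType (R A : Type) [Field R] [Ring A] [Algebra R A] : Prop :=
  ¬ HasFiniteRepType R A ∧ ∀ d : ℕ, 1 ≤ d → Nonempty (TameWitness R A d)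

/-! ## The cyclotomic quiver Hecke algebra of affine type A by generators and relations -/

/-- Generators: idempotents `E ν` for `ν ∈ I^n` (`I = ℤ/(ℓ+1)ℤ`),
polynomial generators `X k` and intertwiners `Psi k`. -/
inductive Gen (ℓ n : ℕ) : Type where
  | E (ν : Fin n → ZMod (ℓ + 1))
  | X (k : Fin n)
  | Psi (k : Fin (n - 1))

variable (R : Type) [Field R]

/-- The free algebra on the generators. -/
abbrev FA (ℓ n : ℕ) : Type := FreeAlgebra R (Gen ℓ n)

def eF (ℓ n : ℕ) (ν : Fin n → ZMod (ℓ + 1)) : FA R ℓ n := FreeAlgebra.ι R (Gen.E ν)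
def xF (ℓ n : ℕ) (k : Fin n) : FA R ℓ n := FreeAlgebra.ι R (Gen.X k)
def pF (ℓ n : ℕ) (k : Fin (n - 1)) : FA R ℓ n := FreeAlgebra.ι R (Gen.Psi k)

/-- The position `k` (0-based) as an element of `Fin n`. -/
def idx0 {n : ℕ} (k : Fin (n - 1)) : Fin n := ⟨k.val, by have := k.isLt; omega⟩
/-- The position `k+1` (0-based) as an element of `Fin n`. -/
def idx1 {n : ℕ} (k : Fin (n - 1)) : Fin n := ⟨k.val + 1, by have := k.isLt; omega⟩

/-- The action of the transposition `s_k` on `I^n`. -/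
def sSwap {ℓ n : ℕ} (k : Fin (n - 1)) (ν : Fin n → ZMod (ℓ + 1)) : Fin n → ZMod (ℓ + 1) :=
  ν ∘ Equiv.swap (idx0 k) (idx1 k)

/-- Evaluation of a (commutative) polynomial in `m` variables at a tuple of elements of the
free algebra, monomials expanded in the order `v 0, v 1, …`. -/
def evalP {ℓ n m : ℕ} (p : MvPolynomial (Fin m) R) (v : Fin m → FA R ℓ n) : FA R ℓ n :=
  Finsupp.sum (AddMonoidAlgebra.coeff p) fun s a => a • ((List.finRange m).map fun i => v i ^ s i).prod

/-- The divided difference `(p(u,v) - p(w,v))/(u - w)` as a polynomial in three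
variables `u = X 0`, `v = X 1`, `w = X 2`. -/
def divDiff (p : MvPolynomial (Fin 2) R) : MvPolynomial (Fin 3) R :=
  Finsupp.sum (AddMonoidAlgebra.coeff p) fun s a =>
    MvPolynomial.C a *
      (∑ t ∈ Finset.range (s 0), MvPolynomial.X 0 ^ t * MvPolynomial.X 2 ^ (s 0 - 1 - t)) *
      MvPolynomial.X 1 ^ (s 1)

/-- The weight (element of `Q⁺`, recorded by its coordinates in the simple roots)
of a tuple `ν ∈ I^n`. -/
def wt (ℓ n : ℕ) (ν : Fin n → ZMod (ℓ + 1)) : ZMod (ℓ + 1) → ℕ :=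
  ∑ k : Fin n, Pi.single (ν k) 1

/-- The defining relations of the cyclotomic quiver Hecke algebra attached to a family of
polynomials `Qf`, a dominant integral weight `Λ` (given by its coordinates `⟨h_i, Λ⟩`), and a
predicate `P` singling out the allowed tuples `ν` (for `R^Λ(β)` take `P ν := wt ν = β`;
for `R^Λ(n)` take `P := fun _ => True`). -/
inductive Rel (ℓ n : ℕ) (Qf : ZMod (ℓ + 1) → ZMod (ℓ + 1) → MvPolynomial (Fin 2) R)
    (Λ : ZMod (ℓ + 1) → ℕ) (P : (Fin n → ZMod (ℓ + 1)) → Prop) :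
    FA R ℓ n → FA R ℓ n → Prop where
  | idem (ν) : Rel ℓ n Qf Λ P (eF R ℓ n ν * eF R ℓ n ν) (eF R ℓ n ν)
  | orth (ν ν') (h : ν ≠ ν') : Rel ℓ n Qf Λ P (eF R ℓ n ν * eF R ℓ n ν') 0
  | unit : Rel ℓ n Qf Λ P (∑ ν : Fin n → ZMod (ℓ + 1), eF R ℓ n ν) 1
  | xComm (k l : Fin n) : Rel ℓ n Qf Λ P (xF R ℓ n k * xF R ℓ n l) (xF R ℓ n l * xF R ℓ n k)
  | xE (k : Fin n) (ν) : Rel ℓ n Qf Λ P (xF R ℓ n k * eF R ℓ n ν) (eF R ℓ n ν * xF R ℓ n k)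
  | psiE (k : Fin (n - 1)) (ν) :
      Rel ℓ n Qf Λ P (pF R ℓ n k * eF R ℓ n ν) (eF R ℓ n (sSwap k ν) * pF R ℓ n k)
  | psiComm (k l : Fin (n - 1)) (h : k.val + 1 < l.val ∨ l.val + 1 < k.val) :
      Rel ℓ n Qf Λ P (pF R ℓ n k * pF R ℓ n l) (pF R ℓ n l * pF R ℓ n k)
  | psiSq (k : Fin (n - 1)) (ν) :
      Rel ℓ n Qf Λ P (pF R ℓ n k * pF R ℓ n k * eF R ℓ n ν)
        (evalP R (Qf (ν (idx0 k)) (ν (idx1 k)))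
          ![xF R ℓ n (idx0 k), xF R ℓ n (idx1 k)] * eF R ℓ n ν)
  | psiX (k : Fin (n - 1)) (l : Fin n) (ν) (h : l ≠ idx0 k) (h' : l ≠ idx1 k) :
      Rel ℓ n Qf Λ P (pF R ℓ n k * xF R ℓ n l * eF R ℓ n ν)
        (xF R ℓ n l * pF R ℓ n k * eF R ℓ n ν)
  | psiX1 (k : Fin (n - 1)) (ν) :
      Rel ℓ n Qf Λ P (pF R ℓ n k * xF R ℓ n (idx1 k) * eF R ℓ n ν)
        ((xF R ℓ n (idx0 k) * pF R ℓ n k +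
          if ν (idx0 k) = ν (idx1 k) then 1 else 0) * eF R ℓ n ν)
  | xPsi (k : Fin (n - 1)) (ν) :
      Rel ℓ n Qf Λ P (xF R ℓ n (idx1 k) * pF R ℓ n k * eF R ℓ n ν)
        ((pF R ℓ n k * xF R ℓ n (idx0 k) +
          if ν (idx0 k) = ν (idx1 k) then 1 else 0) * eF R ℓ n ν)
  | braid (k k' : Fin (n - 1)) (h : k'.val = k.val + 1) (ν) :
      Rel ℓ n Qf Λ P
        ((pF R ℓ n k' * pF R ℓ n k * pF R ℓ n k' - pF R ℓ n k * pF R ℓ n k' * pF R ℓ n k) *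
          eF R ℓ n ν)
        ((if ν (idx0 k) = ν (idx1 k') then 1 else 0) *
          evalP R (divDiff R (Qf (ν (idx0 k)) (ν (idx1 k))))
            ![xF R ℓ n (idx0 k), xF R ℓ n (idx1 k), xF R ℓ n (idx1 k')] * eF R ℓ n ν)
  | cyclo (h0 : 0 < n) (ν) :
      Rel ℓ n Qf Λ P (xF R ℓ n ⟨0, h0⟩ ^ (Λ (ν ⟨0, h0⟩)) * eF R ℓ n ν) 0
  | support (ν) (h : ¬ P ν) : Rel ℓ n Qf Λ P (eF R ℓ n ν) 0

/-- The cyclotomic quiver Hecke algebra presented by the above generators and relations. -/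
abbrev qha (ℓ n : ℕ) (Qf : ZMod (ℓ + 1) → ZMod (ℓ + 1) → MvPolynomial (Fin 2) R)
    (Λ : ZMod (ℓ + 1) → ℕ) (P : (Fin n → ZMod (ℓ + 1)) → Prop) : Type :=
  RingQuot (Rel R ℓ n Qf Λ P)

/-- The canonical map from the free algebra onto the cyclotomic quiver Hecke algebra. -/
abbrev mkQ (ℓ n : ℕ) (Qf : ZMod (ℓ + 1) → ZMod (ℓ + 1) → MvPolynomial (Fin 2) R)
    (Λ : ZMod (ℓ + 1) → ℕ) (P : (Fin n → ZMod (ℓ + 1)) → Prop) :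
    FA R ℓ n →ₐ[R] qha R ℓ n Qf Λ P :=
  RingQuot.mkAlgHom R (Rel R ℓ n Qf Λ P)

/-- The standard form of the polynomials `Q_{ij}` in affine type `A_ℓ^{(1)}`,
with parameter `lam`.  Here `u = X 0` and `v = X 1`. -/
def Qstd (ℓ : ℕ) (lam : R) (i j : ZMod (ℓ + 1)) : MvPolynomial (Fin 2) R :=
  if i = j then 0
  else if ℓ = 1 then
    MvPolynomial.X 0 ^ 2 + MvPolynomial.C lam * (MvPolynomial.X 0 * MvPolynomial.X 1) +
      MvPolynomial.X 1 ^ 2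
  else if j = i + 1 then
    (if i = (ℓ : ZMod (ℓ + 1)) then MvPolynomial.X 0 + MvPolynomial.C lam * MvPolynomial.X 1
     else MvPolynomial.X 0 + MvPolynomial.X 1)
  else if i = j + 1 then
    (if j = (ℓ : ZMod (ℓ + 1)) then MvPolynomial.X 1 + MvPolynomial.C lam * MvPolynomial.X 0
     else MvPolynomial.X 0 + MvPolynomial.X 1)
  else 1

/-- The height of an element of `Q⁺`. -/
def ht (ℓ : ℕ) (β : ZMod (ℓ + 1) → ℕ) : ℕ := ∑ j, β j

/-- `R^Λ(β)` with the standard-form polynomials. -/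
abbrev cyc (ℓ : ℕ) (lam : R) (Λ β : ZMod (ℓ + 1) → ℕ) : Type :=
  qha R ℓ (ht ℓ β) (Qstd R ℓ lam) Λ (fun ν => wt ℓ (ht ℓ β) ν = β)

/-- The simple root `α_j`. -/
def αr (ℓ : ℕ) (j : ZMod (ℓ + 1)) : ZMod (ℓ + 1) → ℕ := Pi.single j 1

/-- The null root `δ = α_0 + ⋯ + α_ℓ`. -/
def δr (ℓ : ℕ) : ZMod (ℓ + 1) → ℕ := fun _ => 1

/-- `λ^s_i = Σ_{k=0}^{s} i α_k + Σ_{k=1}^{i−1} (i−k) α_{s+k} + Σ_{k=1}^{i−1} k α_{ℓ−i+1+k}`. -/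
def lamRoot (ℓ s i : ℕ) : ZMod (ℓ + 1) → ℕ :=
  (∑ k ∈ Finset.range (s + 1), i • αr ℓ (k : ZMod (ℓ + 1)))
  + (∑ k ∈ Finset.Icc 1 (i - 1), (i - k) • αr ℓ ((s : ZMod (ℓ + 1)) + (k : ZMod (ℓ + 1))))
  + (∑ k ∈ Finset.Icc 1 (i - 1),
      k • αr ℓ ((ℓ : ZMod (ℓ + 1)) - (i : ZMod (ℓ + 1)) + 1 + (k : ZMod (ℓ + 1))))

/-- `μ^s_i = Σ_{k=0}^{i−1} (i−k) α_k + Σ_{k=1}^{i−1} k α_{s−i+k} + Σ_{k=1}^{ℓ−s+1} i α_{s−1+k}`. -/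
def muRoot (ℓ s i : ℕ) : ZMod (ℓ + 1) → ℕ :=
  (∑ k ∈ Finset.range i, (i - k) • αr ℓ (k : ZMod (ℓ + 1)))
  + (∑ k ∈ Finset.Icc 1 (i - 1),
      k • αr ℓ ((s : ZMod (ℓ + 1)) - (i : ZMod (ℓ + 1)) + (k : ZMod (ℓ + 1))))
  + (∑ k ∈ Finset.Icc 1 (ℓ - s + 1),
      i • αr ℓ ((s : ZMod (ℓ + 1)) - 1 + (k : ZMod (ℓ + 1))))

/-- The coordinates of the level two weight `Λ_0 + Λ_s`. -/
def wtL (ℓ s : ℕ) : ZMod (ℓ + 1) → ℕ :=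
  fun j => (if j = 0 then 1 else 0) + (if j = (s : ZMod (ℓ + 1)) then 1 else 0)

/-- The coordinates of the weight `2Λ_0`. -/
def wt2L0 (ℓ : ℕ) : ZMod (ℓ + 1) → ℕ := fun j => if j = 0 then 2 else 0

/-- The Cartan matrix of affine type `A_ℓ^{(1)}`. -/
def cartan (ℓ : ℕ) (i j : ZMod (ℓ + 1)) : ℤ :=
  if i = j then 2
  else if ℓ = 1 then -2
  else if j = i + 1 ∨ i = j + 1 then -1
  else 0

/-- The category of finite-dimensional (over `R`) modules over the `R`-algebra `A`. -/
abbrev FdModCat (R A : Type) [Field R] [Ring A] [Algebra R A] :=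
  CategoryTheory.ObjectProperty.FullSubcategory
    (fun M : ModuleCat.{0} A => @FiniteDimensional R (RestrictScalars R A M) _ _ (RestrictScalars.module R A M))

private theorem ring_aux_qha {A : Type} [Ring A] (e x y s : A)
    (he : x * e = e * x) (hy : y * e = e * y) (hs : s * e = e * s)
    (hss : s * s * e = 0)
    (h5 : s * y * e = x * s * e + e)
    (h6 : y * s * e = s * x * e + e)
    (h7 : x * y = y * x)
    (hx : x * x * e = 0) :
    y * e = -(x * e) := by
  have P : ∀ a b c : A, b * c = c * b → a * b * c = a * c * b := by
    intro a b c h; rw [mul_assoc, h, ← mul_assoc]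
  have d1 : s * x * e = y * s * e - e := eq_sub_of_add_eq h6.symm
  have hxs : x * x * s * e = 0 := by
    rw [P (x * x) s e hs, hx, zero_mul]
  -- (2)
  have sx2 : s * x * x * e = y * y * s * e - y * e - x * e := by
    calc s * x * x * e = s * x * e * x := P (s * x) x e he
      _ = (y * s * e - e) * x := by rw [d1]
      _ = y * s * e * x - e * x := by rw [sub_mul]
      _ = y * s * x * e - x * e := by rw [P (y * s) e x he.symm, ← he]
      _ = y * (s * x * e) - x * e := by simp only [← mul_assoc]
      _ = y * (y * s * e) - y * e - x * e := by rw [d1, mul_sub, sub_sub]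
      _ = y * y * s * e - y * e - x * e := by simp only [← mul_assoc]
  -- key identity
  have hxs2 : s * (x * x * s * e) = -(y * s * e) - x * s * e := by
    calc s * (x * x * s * e) = s * x * x * s * e := by simp only [← mul_assoc]
      _ = s * x * x * e * s := P (s * x * x) s e hs
      _ = (y * y * s * e - y * e - x * e) * s := by rw [sx2]
      _ = y * y * s * e * s - y * e * s - x * e * s := by rw [sub_mul, sub_mul]
      _ = y * y * s * s * e - y * s * e - x * s * e := by
            rw [P (y * y * s) e s hs.symm, P y e s hs.symm, P x e s hs.symm]
      _ = -(y * s * e) - x * s * e := by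
            rw [show y * y * s * s * e = y * y * (s * s * e) by
                  simp only [← mul_assoc], hss, mul_zero, zero_sub]
  have hw : x * s * e + y * s * e = 0 := by
    rw [hxs, mul_zero] at hxs2
    have h1 : -(y * s * e) - x * s * e = 0 := hxs2.symm
    calc x * s * e + y * s * e = -(-(y * s * e) - x * s * e) := by abel
      _ = 0 := by rw [h1, neg_zero]
  have hyse : y * s * e = -(x * s * e) := by
    have := hw
    calc y * s * e = -(x * s * e) + (x * s * e + y * s * e) := by abel
      _ = -(x * s * e) := by rw [hw, add_zero]
  -- c1
  have c1 : y * (s * x * e) = x * e := by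
    calc y * (s * x * e) = y * s * x * e := by simp only [← mul_assoc]
      _ = y * s * e * x := P (y * s) x e he
      _ = (s * x * e + e) * x := by rw [h6]
      _ = s * x * e * x + e * x := by rw [add_mul]
      _ = s * x * x * e + x * e := by rw [P (s * x) e x he.symm, ← he]
      _ = s * (x * x * e) + x * e := by simp only [← mul_assoc]
      _ = x * e := by rw [hx, mul_zero, zero_add]
  -- c2
  have sxye : s * x * y * e = 0 := by
    calc s * x * y * e = s * (x * y) * e := by rw [mul_assoc s x y]
      _ = s * (y * x) * e := by rw [h7]
      _ = s * y * x * e := by rw [← mul_assoc s y x]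
      _ = s * y * e * x := P (s * y) x e he
      _ = (x * s * e + e) * x := by rw [h5]
      _ = x * s * e * x + e * x := by rw [add_mul]
      _ = x * s * x * e + x * e := by rw [P (x * s) e x he.symm, ← he]
      _ = x * (s * x * e) + x * e := by simp only [← mul_assoc]
      _ = x * (y * s * e) - x * e + x * e := by rw [d1, mul_sub]
      _ = x * (y * s * e) := by rw [sub_add_cancel]
      _ = -(x * (x * s * e)) := by rw [hyse, mul_neg]
      _ = 0 := by
            rw [show x * (x * s * e) = x * x * s * e by simp only [← mul_assoc], hxs, neg_zero]
  have c2 : y * (s * y * e) = y * e := by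
    calc y * (s * y * e) = y * s * y * e := by simp only [← mul_assoc]
      _ = y * s * e * y := P (y * s) y e hy
      _ = (s * x * e + e) * y := by rw [h6]
      _ = s * x * e * y + e * y := by rw [add_mul]
      _ = s * x * y * e + y * e := by rw [P (s * x) e y hy.symm, ← hy]
      _ = y * e := by rw [sxye, zero_add]
  -- finish
  have hz : s * x * e + s * y * e = 0 := by
    rw [d1, h5]
    calc y * s * e - e + (x * s * e + e) = x * s * e + y * s * e := by abel
      _ = 0 := hw
  have final : x * e + y * e = 0 := by
    have h0 : y * (s * x * e + s * y * e) = 0 := by rw [hz, mul_zero]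
    rw [mul_add, c1, c2] at h0
    exact h0
  exact eq_neg_of_add_eq_zero_right final

/-- If `ν_i = ν_{i+1}` and `x_i² e(ν) = 0` then `x_{i+1} e(ν) = -x_i e(ν)`. -/
theorem formula_three (R : Type) [Field R] [IsAlgClosed R] (ℓ : ℕ) (hℓ : 1 ≤ ℓ)
    (lam : R) (hlam : 2 ≤ ℓ → lam ≠ 0)
    (n : ℕ) (Λ : ZMod (ℓ + 1) → ℕ) (ν : Fin n → ZMod (ℓ + 1)) (p : Fin (n - 1))
    (heq : ν (idx0 p) = ν (idx1 p))
    (h : mkQ R ℓ n (Qstd R ℓ lam) Λ (fun _ => True)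
          (xF R ℓ n (idx0 p) * xF R ℓ n (idx0 p) * eF R ℓ n ν) = 0) :
    mkQ R ℓ n (Qstd R ℓ lam) Λ (fun _ => True) (xF R ℓ n (idx1 p) * eF R ℓ n ν) =
      - mkQ R ℓ n (Qstd R ℓ lam) Λ (fun _ => True) (xF R ℓ n (idx0 p) * eF R ℓ n ν) := by
  classical
  have hsw : sSwap p ν = ν := by
    funext i
    simp only [sSwap, Function.comp_apply]
    rcases eq_or_ne i (idx0 p) with h0 | h0
    · rw [h0, Equiv.swap_apply_left]; exact heq.symm
    · rcases eq_or_ne i (idx1 p) with h1 | h1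
      · rw [h1, Equiv.swap_apply_right]; exact heq
      · rw [Equiv.swap_apply_of_ne_of_ne h0 h1]
  set f := mkQ R ℓ n (Qstd R ℓ lam) Λ (fun _ => True) with hfdef
  have he : f (xF R ℓ n (idx0 p)) * f (eF R ℓ n ν)
      = f (eF R ℓ n ν) * f (xF R ℓ n (idx0 p)) := by
    rw [← map_mul, ← map_mul]
    exact RingQuot.mkAlgHom_rel R (Rel.xE _ _)
  have hy : f (xF R ℓ n (idx1 p)) * f (eF R ℓ n ν)
      = f (eF R ℓ n ν) * f (xF R ℓ n (idx1 p)) := by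
    rw [← map_mul, ← map_mul]
    exact RingQuot.mkAlgHom_rel R (Rel.xE _ _)
  have hs : f (pF R ℓ n p) * f (eF R ℓ n ν)
      = f (eF R ℓ n ν) * f (pF R ℓ n p) := by
    have h0 := RingQuot.mkAlgHom_rel R
      (Rel.psiE (R := R) (ℓ := ℓ) (n := n) (Qf := Qstd R ℓ lam) (Λ := Λ)
        (P := fun _ => True) p ν)
    rw [hsw] at h0
    simpa only [map_mul] using h0
  have hQ0 : Qstd R ℓ lam (ν (idx0 p)) (ν (idx1 p)) = 0 := by
    rw [Qstd, if_pos heq]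
  have hss : f (pF R ℓ n p) * f (pF R ℓ n p) * f (eF R ℓ n ν) = 0 := by
    have h0 := RingQuot.mkAlgHom_rel R
      (Rel.psiSq (R := R) (ℓ := ℓ) (n := n) (Qf := Qstd R ℓ lam) (Λ := Λ)
        (P := fun _ => True) p ν)
    rw [hQ0] at h0
    have hev : evalP R (0 : MvPolynomial (Fin 2) R)
        ![xF R ℓ n (idx0 p), xF R ℓ n (idx1 p)] = 0 := by
      simp [evalP]
    rw [hev, zero_mul, map_zero] at h0
    simpa only [map_mul] using h0
  have h5 : f (pF R ℓ n p) * f (xF R ℓ n (idx1 p)) * f (eF R ℓ n ν)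
      = f (xF R ℓ n (idx0 p)) * f (pF R ℓ n p) * f (eF R ℓ n ν) + f (eF R ℓ n ν) := by
    have h0 := RingQuot.mkAlgHom_rel R
      (Rel.psiX1 (R := R) (ℓ := ℓ) (n := n) (Qf := Qstd R ℓ lam) (Λ := Λ)
        (P := fun _ => True) p ν)
    rw [if_pos heq] at h0
    simp only [map_mul, map_add, map_one] at h0
    rw [h0, add_mul, one_mul]
  have h6 : f (xF R ℓ n (idx1 p)) * f (pF R ℓ n p) * f (eF R ℓ n ν)
      = f (pF R ℓ n p) * f (xF R ℓ n (idx0 p)) * f (eF R ℓ n ν) + f (eF R ℓ n ν) := by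
    have h0 := RingQuot.mkAlgHom_rel R
      (Rel.xPsi (R := R) (ℓ := ℓ) (n := n) (Qf := Qstd R ℓ lam) (Λ := Λ)
        (P := fun _ => True) p ν)
    rw [if_pos heq] at h0
    simp only [map_mul, map_add, map_one] at h0
    rw [h0, add_mul, one_mul]
  have h7 : f (xF R ℓ n (idx0 p)) * f (xF R ℓ n (idx1 p))
      = f (xF R ℓ n (idx1 p)) * f (xF R ℓ n (idx0 p))  := by
    rw [← map_mul, ← map_mul]
    exact RingQuot.mkAlgHom_rel R (Rel.xComm _ _)
  simp only [map_mul] at h ⊢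
  exact ring_aux_qha (f (eF R ℓ n ν)) (f (xF R ℓ n (idx0 p))) (f (xF R ℓ n (idx1 p)))
    (f (pF R ℓ n p)) he hy hs hss h5 h6 h7 h

end QHApaper
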